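/- Let 0 < α < 1. Then there exists a constant C > 0, depending only on α, such that for all t > 0 and all w > 0 one has E_{α,1}(w t^α) ≤ C · exp(w^{1/α} · t). -/

import Mathlib

/-- The two-parameter Mittag-Leffler function `E_{α,β}(x) = ∑ xᵏ / Γ(αk+β)` (real version). -/
noncomputable def mittagLeffler (α β x : ℝ) : ℝ :=
  ∑' k : ℕ, x ^ k / Real.Gamma (α * k + β)

/-- `Γ(y) ≥ 1` for `y ≥ 2`, by convexity with the points `1` and `y`. -/
lemma one_le_Gamma_aux (x : ℝ) (hx0 : 0 ≤ x) : (1 : ℝ) ≤ Real.Gamma (x + 2) := by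
  have h2 : Real.Gamma 2 = 1 := by
    rw [show (2:ℝ) = 1 + 1 by norm_num, Real.Gamma_add_one one_ne_zero, Real.Gamma_one]
    ring
  rcases eq_or_lt_of_le hx0 with h | h
  · rw [← h, zero_add, h2]
  · have hx1 : (0:ℝ) < x + 1 := by linarith
    have key := Real.convexOn_Gamma.2 (Set.mem_Ioi.mpr one_pos)
      (Set.mem_Ioi.mpr (by linarith : (0:ℝ) < x + 2))
      (show (0:ℝ) ≤ x / (x + 1) by positivity)
      (show (0:ℝ) ≤ 1 / (x + 1) by positivity)
      (show x / (x + 1) + 1 / (x + 1) = 1 by field_simp)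
    have hcomb : (x / (x + 1)) • (1:ℝ) + (1 / (x + 1)) • (x + 2) = 2 := by
      simp only [smul_eq_mul]
      field_simp
      ring
    rw [hcomb] at key
    rw [h2, Real.Gamma_one] at key
    simp only [smul_eq_mul, mul_one] at key
    -- key : 1 ≤ x/(x+1) + (1/(x+1)) * Γ(x+2)
    have hab : x / (x + 1) + 1 / (x + 1) = 1 := by field_simp
    have hrec : 1 / (x + 1) * 1 ≤ 1 / (x + 1) * Real.Gamma (x + 2) := by
      rw [mul_one]; linarith
    exact (mul_le_mul_iff_right₀ (show (0:ℝ) < 1/(x+1) by positivity)).mp hrec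

/-- The key pointwise bound: for `x ≥ 0`, `s > 0`, with `n = ⌊x⌋₊`,
`s^x / Γ(x+1) ≤ 2 (s^n/n! + s^(n+1)/(n+1)!)`. -/
lemma term_bound (s x : ℝ) (hs : 0 < s) (hx : 0 ≤ x) :
    s ^ x / Real.Gamma (x + 1) ≤
      2 * (s ^ ⌊x⌋₊ / (Nat.factorial ⌊x⌋₊ : ℝ) +
        s ^ (⌊x⌋₊ + 1) / (Nat.factorial (⌊x⌋₊ + 1) : ℝ)) := by
  set n := ⌊x⌋₊ with hn
  have hnx : (n : ℝ) ≤ x := Nat.floor_le hx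
  have hxn1 : x < n + 1 := Nat.lt_floor_add_one x
  have hΓpos : 0 < Real.Gamma (x + 1) := Real.Gamma_pos_of_pos (by linarith)
  have hfac : (0:ℝ) < (Nat.factorial n : ℝ) := by exact_mod_cast Nat.factorial_pos n
  have hfac1 : (0:ℝ) < (Nat.factorial (n+1) : ℝ) := by exact_mod_cast Nat.factorial_pos (n+1)
  rcases Nat.eq_zero_or_pos n with h0 | hpos
  · -- n = 0, so 0 ≤ x < 1
    have hx1 : x < 1 := by rw [h0] at hxn1; simpa using hxn1
    have hΓ2 : (1:ℝ) ≤ Real.Gamma (x + 2) := one_le_Gamma_aux x hx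
    have hΓeq : Real.Gamma (x + 2) = (x + 1) * Real.Gamma (x + 1) := by
      have := Real.Gamma_add_one (s := x + 1) (by linarith)
      rw [show x + 2 = (x + 1) + 1 by ring, this]
    have hΓlb : 1 / 2 ≤ Real.Gamma (x + 1) := by
      have h1 : (1:ℝ) ≤ (x + 1) * Real.Gamma (x + 1) := by rw [← hΓeq]; exact hΓ2
      nlinarith [hΓpos]
    have hsx : s ^ x ≤ 1 + s := by
      rcases le_or_gt 1 s with h1s | hs1
      · have : s ^ x ≤ s ^ (1:ℝ) := Real.rpow_le_rpow_of_exponent_le h1s hx1.le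
        rw [Real.rpow_one] at this; linarith
      · have : s ^ x ≤ s ^ (0:ℝ) := Real.rpow_le_rpow_of_exponent_ge hs hs1.le hx
        rw [Real.rpow_zero] at this; linarith
    have hd : s ^ x / Real.Gamma (x + 1) ≤ (1 + s) / (1 / 2) :=
      div_le_div₀ (by linarith) hsx (by norm_num) hΓlb
    rw [h0]
    have h2 : (1 + s) / (1 / 2) = 2 * (s ^ (0:ℕ) / (Nat.factorial 0 : ℝ) +
        s ^ (0 + 1) / (Nat.factorial (0 + 1) : ℝ)) := by
      norm_num
      all_goals ring
    linarith [h2.le, h2.ge]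
  · -- n ≥ 1
    have hnpos : (0:ℝ) < (n : ℝ) := by exact_mod_cast hpos
    have hΓkey : (Nat.factorial n : ℝ) * (n : ℝ) ^ (x - n) ≤ Real.Gamma (x + 1) := by
      rcases eq_or_lt_of_le hnx with heq | hlt
      · rw [← heq]
        simp only [sub_self, Real.rpow_zero, mul_one]
        rw [show (n:ℝ) + 1 = ((n:ℕ) : ℝ) + 1 by norm_num, Real.Gamma_nat_eq_factorial]
      · have hmem1 : (n : ℝ) ∈ Set.Ioi (0:ℝ) := hnpos
        have hmem2 : x + 1 ∈ Set.Ioi (0:ℝ) := by simp; linarith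
        have hslope := Real.convexOn_log_Gamma.slope_mono_adjacent hmem1 hmem2
          (by linarith : (n:ℝ) < (n:ℝ) + 1) (by linarith : (n:ℝ) + 1 < x + 1)
        have hΓn : Real.Gamma ((n:ℝ) + 1) = (n:ℝ) * Real.Gamma n :=
          Real.Gamma_add_one (by positivity)
        have hΓnpos : 0 < Real.Gamma (n : ℝ) := Real.Gamma_pos_of_pos hnpos
        have hΓn1pos : 0 < Real.Gamma ((n:ℝ) + 1) := Real.Gamma_pos_of_pos (by linarith)
        have hlog : (Real.log ∘ Real.Gamma) ((n:ℝ) + 1) - (Real.log ∘ Real.Gamma) (n:ℝ)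
            = Real.log n := by
          simp only [Function.comp_apply, hΓn, Real.log_mul (ne_of_gt hnpos) (ne_of_gt hΓnpos)]
          ring
        rw [show (n:ℝ) + 1 - (n:ℝ) = 1 by ring, div_one, hlog] at hslope
        have hxn : 0 < x - n := by linarith
        rw [show x + 1 - ((n:ℝ) + 1) = x - n by ring, le_div_iff₀ hxn] at hslope
        -- hslope : log n * (x - n) ≤ logΓ(x+1) - logΓ(n+1)
        simp only [Function.comp_apply] at hslope
        have hexp : (Nat.factorial n : ℝ) * (n : ℝ) ^ (x - n)
            = Real.exp (Real.log (Real.Gamma ((n:ℝ) + 1)) + Real.log (n:ℝ) * (x - n)) := by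
          rw [Real.exp_add, Real.exp_log hΓn1pos, ← Real.rpow_def_of_pos hnpos]
          rw [show (n:ℝ) + 1 = ((n:ℕ) : ℝ) + 1 by norm_num, Real.Gamma_nat_eq_factorial]
        rw [hexp]
        have hΓx1pos : 0 < Real.Gamma (x + 1) := hΓpos
        calc Real.exp (Real.log (Real.Gamma ((n:ℝ) + 1)) + Real.log (n:ℝ) * (x - n))
            ≤ Real.exp (Real.log (Real.Gamma (x + 1))) := by
              apply Real.exp_le_exp.mpr; linarith
          _ = Real.Gamma (x + 1) := Real.exp_log hΓx1pos
    have hden : 0 < (Nat.factorial n : ℝ) * (n : ℝ) ^ (x - n) := by positivity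
    have step1 : s ^ x / Real.Gamma (x + 1) ≤ s ^ x / ((Nat.factorial n : ℝ) * (n:ℝ) ^ (x - n)) := by
      gcongr
      all_goals exact Real.rpow_nonneg hs.le x
    have hsplit : s ^ x = s ^ n * s ^ (x - (n:ℝ)) := by
      rw [← Real.rpow_natCast s n, ← Real.rpow_add hs]
      all_goals ring_nf
    have step2 : s ^ x / ((Nat.factorial n : ℝ) * (n:ℝ) ^ (x - n))
        = (s ^ n / (Nat.factorial n : ℝ)) * (s / n) ^ (x - (n:ℝ)) := by
      rw [hsplit, Real.div_rpow hs.le hnpos.le]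
      field_simp
      all_goals ring
    rcases le_or_gt s n with hsn | hns
    · have hle1 : (s / n) ^ (x - (n:ℝ)) ≤ 1 :=
        Real.rpow_le_one (by positivity) (by rw [div_le_one hnpos]; exact hsn) (by linarith)
      have : s ^ x / Real.Gamma (x + 1) ≤ s ^ n / (Nat.factorial n : ℝ) := by
        calc s ^ x / Real.Gamma (x + 1)
            ≤ (s ^ n / (Nat.factorial n : ℝ)) * (s / n) ^ (x - (n:ℝ)) := by
              rw [← step2]; exact step1
          _ ≤ (s ^ n / (Nat.factorial n : ℝ)) * 1 := by
              apply mul_le_mul_of_nonneg_left hle1 (by positivity)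
          _ = s ^ n / (Nat.factorial n : ℝ) := mul_one _
      have hpos2 : 0 ≤ s ^ (n+1) / (Nat.factorial (n+1) : ℝ) := by positivity
      have hpos1 : 0 ≤ s ^ n / (Nat.factorial n : ℝ) := by positivity
      linarith
    · have h1sn : 1 ≤ s / n := by rw [le_div_iff₀ hnpos]; linarith
      have hle1 : (s / n) ^ (x - (n:ℝ)) ≤ s / n := by
        have : (s / n) ^ (x - (n:ℝ)) ≤ (s / n) ^ (1:ℝ) :=
          Real.rpow_le_rpow_of_exponent_le h1sn (by linarith)
        rwa [Real.rpow_one] at this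
      have key : s ^ x / Real.Gamma (x + 1) ≤ s ^ (n+1) / ((Nat.factorial n : ℝ) * n) := by
        calc s ^ x / Real.Gamma (x + 1)
            ≤ (s ^ n / (Nat.factorial n : ℝ)) * (s / n) ^ (x - (n:ℝ)) := by
              rw [← step2]; exact step1
          _ ≤ (s ^ n / (Nat.factorial n : ℝ)) * (s / n) := by
              apply mul_le_mul_of_nonneg_left hle1 (by positivity)
          _ = s ^ (n+1) / ((Nat.factorial n : ℝ) * n) := by
              rw [pow_succ]; field_simp
              all_goals ring
      have hfaceq : (Nat.factorial (n+1) : ℝ) = ((n:ℝ) + 1) * (Nat.factorial n : ℝ) := by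
        rw [Nat.factorial_succ]; push_cast; ring
      have hcmp : s ^ (n+1) / ((Nat.factorial n : ℝ) * n) ≤ 2 * (s ^ (n+1) / (Nat.factorial (n+1) : ℝ)) := by
        rw [div_le_iff₀ (by positivity), mul_comm 2 _, mul_assoc, div_mul_eq_mul_div,
          le_div_iff₀ hfac1]
        have hsp : 0 ≤ s ^ (n+1) := by positivity
        have : (Nat.factorial (n+1) : ℝ) ≤ 2 * ((Nat.factorial n : ℝ) * n) := by
          rw [hfaceq]
          nlinarith [hfac, hnpos, (by exact_mod_cast hpos : (1:ℝ) ≤ (n:ℝ))]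
        nlinarith [hsp, this]
      have hpos1 : 0 ≤ s ^ n / (Nat.factorial n : ℝ) := by positivity
      linarith

/-- Any finite partial sum of the exponential series is at most `exp s`. -/
lemma finset_sum_exp_le (s : ℝ) (hs : 0 ≤ s) (B : Finset ℕ) :
    ∑ n ∈ B, s ^ n / (Nat.factorial n : ℝ) ≤ Real.exp s := by
  classical
  have hsub : B ⊆ Finset.range (B.sup id + 1) := by
    intro n hn
    simp only [Finset.mem_range]
    exact Nat.lt_succ_of_le (Finset.le_sup (f := id) hn)
  calc ∑ n ∈ B, s ^ n / (Nat.factorial n : ℝ)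
      ≤ ∑ n ∈ Finset.range (B.sup id + 1), s ^ n / (Nat.factorial n : ℝ) :=
        Finset.sum_le_sum_of_subset_of_nonneg hsub (fun i _ _ => by positivity)
    _ ≤ Real.exp s := Real.sum_le_exp_of_nonneg hs _

/-- Shifted version. -/
lemma finset_sum_exp_le' (s : ℝ) (hs : 0 ≤ s) (B : Finset ℕ) :
    ∑ n ∈ B, s ^ (n + 1) / (Nat.factorial (n + 1) : ℝ) ≤ Real.exp s := by
  classical
  have hinj : ∀ x ∈ B, ∀ y ∈ B, x + 1 = y + 1 → x = y := fun x _ y _ h => by omega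
  have heq := Finset.sum_image (g := fun n : ℕ => n + 1)
    (f := fun m : ℕ => s ^ m / (Nat.factorial m : ℝ)) (s := B) hinj
  rw [← heq]
  exact finset_sum_exp_le s hs _

/-- The fibers of `k ↦ ⌊α k⌋₊` have at most `⌈1/α⌉₊` elements. -/
lemma fiber_card_le (α : ℝ) (hα : 0 < α) (A : Finset ℕ) (n : ℕ) :
    (A.filter fun k : ℕ => ⌊α * (k:ℝ)⌋₊ = n).card ≤ ⌈1/α⌉₊ := by
  classical
  set c := ⌈(n : ℝ) / α⌉₊ with hc
  have hsub : (A.filter fun k : ℕ => ⌊α * (k:ℝ)⌋₊ = n) ⊆ Finset.Ico c (c + ⌈1/α⌉₊) := by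
    intro k hk
    rw [Finset.mem_filter] at hk
    obtain ⟨-, hk⟩ := hk
    have hk0 : (0:ℝ) ≤ α * k := by positivity
    have h1 : (n : ℝ) ≤ α * k := by rw [← hk]; exact Nat.floor_le hk0
    have h2 : α * k < n + 1 := by rw [← hk]; exact Nat.lt_floor_add_one _
    rw [Finset.mem_Ico]
    constructor
    · rw [hc]
      apply Nat.ceil_le.mpr
      rw [div_le_iff₀ hα]
      linarith [mul_comm α (k:ℝ)]
    · have hkr : (k : ℝ) < ((n:ℝ) + 1) / α := by
        rw [lt_div_iff₀ hα]
        linarith [mul_comm α (k:ℝ)]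
      have hcl : (n : ℝ) / α ≤ (c : ℝ) := Nat.le_ceil _
      have hMl : 1 / α ≤ (⌈1/α⌉₊ : ℝ) := Nat.le_ceil _
      have : (k : ℝ) < (c : ℝ) + (⌈1/α⌉₊ : ℝ) := by
        have : ((n:ℝ) + 1) / α = (n:ℝ)/α + 1/α := by ring
        rw [this] at hkr
        linarith
      exact_mod_cast this
  calc (A.filter fun k : ℕ => ⌊α * (k:ℝ)⌋₊ = n).card ≤ (Finset.Ico c (c + ⌈1/α⌉₊)).card :=
        Finset.card_le_card hsub
    _ = ⌈1/α⌉₊ := by rw [Nat.card_Ico]; omega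

/-- Grouping a sum over `k` by the value of `⌊α k⌋₊`. -/
lemma group_sum (α : ℝ) (hα : 0 < α) (A : Finset ℕ) (h : ℕ → ℝ) (h0 : ∀ n, 0 ≤ h n)
    (E : ℝ) (hE : ∀ B : Finset ℕ, ∑ n ∈ B, h n ≤ E) :
    ∑ k ∈ A, h ⌊α * k⌋₊ ≤ (⌈1/α⌉₊ : ℝ) * E := by
  classical
  have hE0 : 0 ≤ E := le_trans (by simp) (hE ∅)
  rw [Finset.sum_comp (f := h) (g := fun k : ℕ => ⌊α * (k:ℝ)⌋₊)]
  calc ∑ b ∈ A.image (fun k : ℕ => ⌊α * (k:ℝ)⌋₊),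
        (A.filter fun k : ℕ => ⌊α * (k:ℝ)⌋₊ = b).card • h b
      ≤ ∑ b ∈ A.image (fun k : ℕ => ⌊α * (k:ℝ)⌋₊), (⌈1/α⌉₊ : ℝ) * h b := by
        apply Finset.sum_le_sum
        intro b _
        rw [nsmul_eq_mul]
        apply mul_le_mul_of_nonneg_right _ (h0 b)
        exact_mod_cast fiber_card_le α hα A b
    _ = (⌈1/α⌉₊ : ℝ) * ∑ b ∈ A.image (fun k : ℕ => ⌊α * (k:ℝ)⌋₊), h b := by
            rw [Finset.mul_sum]
    _ ≤ (⌈1/α⌉₊ : ℝ) * E := by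
        apply mul_le_mul_of_nonneg_left (hE _) (by positivity)

/-- The main estimate: `E_α(s^α) ≤ 4⌈1/α⌉ e^s` for `s > 0`. -/
lemma ml_bound (α : ℝ) (hα0 : 0 < α) (s : ℝ) (hs : 0 < s) :
    mittagLeffler α 1 (s ^ α) ≤ (4 * (⌈1/α⌉₊ : ℝ)) * Real.exp s := by
  classical
  unfold mittagLeffler
  set M : ℝ := (⌈1/α⌉₊ : ℝ) with hM
  have hMpos : 0 < M := by
    rw [hM]
    exact_mod_cast Nat.ceil_pos.mpr (by positivity : (0:ℝ) < 1/α)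
  set f : ℕ → ℝ := fun k => (s ^ α) ^ k / Real.Gamma (α * k + 1) with hf
  have hf0 : ∀ k, 0 ≤ f k := by
    intro k
    have hΓ : 0 < Real.Gamma (α * k + 1) := Real.Gamma_pos_of_pos (by positivity)
    have : (0:ℝ) ≤ (s ^ α) ^ k := by positivity
    positivity
  have hkey : ∀ A : Finset ℕ, ∑ k ∈ A, f k ≤ (4 * M) * Real.exp s := by
    intro A
    have hterm : ∀ k : ℕ, f k ≤ 2 * (s ^ ⌊α * k⌋₊ / (Nat.factorial ⌊α * k⌋₊ : ℝ) +
        s ^ (⌊α * k⌋₊ + 1) / (Nat.factorial (⌊α * k⌋₊ + 1) : ℝ)) := by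
      intro k
      have hx : (0:ℝ) ≤ α * k := by positivity
      have hrw : (s ^ α) ^ k = s ^ (α * k) := by
        rw [← Real.rpow_natCast (s ^ α) k, ← Real.rpow_mul hs.le]
      rw [hf]
      simp only
      rw [hrw]
      exact term_bound s (α * k) hs hx
    calc ∑ k ∈ A, f k
        ≤ ∑ k ∈ A, 2 * (s ^ ⌊α * k⌋₊ / (Nat.factorial ⌊α * k⌋₊ : ℝ) +
            s ^ (⌊α * k⌋₊ + 1) / (Nat.factorial (⌊α * k⌋₊ + 1) : ℝ)) :=
          Finset.sum_le_sum (fun k _ => hterm k)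
      _ = 2 * ((∑ k ∈ A, s ^ ⌊α * k⌋₊ / (Nat.factorial ⌊α * k⌋₊ : ℝ)) +
            ∑ k ∈ A, s ^ (⌊α * k⌋₊ + 1) / (Nat.factorial (⌊α * k⌋₊ + 1) : ℝ)) := by
          rw [← Finset.sum_add_distrib, Finset.mul_sum]
      _ ≤ 2 * (M * Real.exp s + M * Real.exp s) := by
          have h1 := group_sum α hα0 A (fun n => s ^ n / (Nat.factorial n : ℝ))
            (fun n => by positivity) (Real.exp s) (finset_sum_exp_le s hs.le)
          have h2 := group_sum α hα0 A (fun n => s ^ (n+1) / (Nat.factorial (n+1) : ℝ))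
            (fun n => by positivity) (Real.exp s) (finset_sum_exp_le' s hs.le)
          have := add_le_add h1 h2
          linarith
      _ = (4 * M) * Real.exp s := by ring
  have hsummable : Summable f := summable_of_sum_le hf0 hkey
  exact Summable.tsum_le_of_sum_le hsummable hkey

theorem stmt1 (α : ℝ) (hα0 : 0 < α) (hα1 : α < 1) :
    ∃ C : ℝ, 0 < C ∧ ∀ t w : ℝ, 0 < t → 0 < w →
      mittagLeffler α 1 (w * t ^ α) ≤ C * Real.exp (w ^ (1 / α) * t) := by
  refine ⟨4 * (⌈1/α⌉₊ : ℝ), ?_, ?_⟩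
  · have : 0 < (⌈1/α⌉₊ : ℝ) := by
      exact_mod_cast Nat.ceil_pos.mpr (by positivity : (0:ℝ) < 1/α)
    linarith
  · intro t w ht hw
    set s : ℝ := w ^ (1/α) * t with hsdef
    have hs : 0 < s := by
      have : (0:ℝ) < w ^ (1/α) := Real.rpow_pos_of_pos hw _
      positivity
    have hws : w * t ^ α = s ^ α := by
      rw [hsdef, Real.mul_rpow (Real.rpow_nonneg hw.le _) ht.le,
        ← Real.rpow_mul hw.le, one_div, inv_mul_cancel₀ (ne_of_gt hα0), Real.rpow_one]
    rw [hws]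
    exact ml_bound α hα0 s hs
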